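/- There exists a constant l̄_* > 0 such that for every integer n ≥ 2 the following holds: if D = B(x₁, r₁) × B(x₂, r₂) ⊆ ℂ² is a product of closed discs with r₁ r₂ < e^{−l̄_*} n^{−3}, then there exists a complex affine line L ⊆ ℂ² with D ∩ R_n ⊆ L, where R_n = { (z₁/q, z₂/q) ∈ ℂ² : z₁, z₂, q ∈ ℤ[i], 0 < |q| < n } and ℤ[i] denotes the ring of Gaussian integers. -/

import Mathlib

open Metric Set

/-- A Gaussian integer, viewed inside `ℂ`. -/
def IsGaussianInt (z : ℂ) : Prop := ∃ a b : ℤ, z = (a : ℂ) + (b : ℂ) * Complex.I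

/-- **complex Simplex Lemma.** There is `l̄_* > 0` such that for
every integer `n ≥ 2`: if `D = B(x₁,r₁) × B(x₂,r₂) ⊆ ℂ²` with
`r₁ r₂ < e^{−l̄_*} n^{−3}`, then `D ∩ R_n` is contained in a complex affine
line `{w | a w₁ + b w₂ = c}` (with `(a,b) ≠ (0,0)`), where `R_n` consists of the
vectors `(z₁/q, z₂/q)` with `z₁, z₂, q` Gaussian integers and `0 < |q| < n`. -/
lemma gi_mul {x y : ℂ} (hx : IsGaussianInt x) (hy : IsGaussianInt y) :
    IsGaussianInt (x * y) := by
  obtain ⟨a, b, rfl⟩ := hx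
  obtain ⟨c, d, rfl⟩ := hy
  exact ⟨a * c - b * d, a * d + b * c, by push_cast; linear_combination (b : ℂ) * (d : ℂ) * Complex.I_sq⟩

lemma gi_sub {x y : ℂ} (hx : IsGaussianInt x) (hy : IsGaussianInt y) :
    IsGaussianInt (x - y) := by
  obtain ⟨a, b, rfl⟩ := hx
  obtain ⟨c, d, rfl⟩ := hy
  exact ⟨a - c, b - d, by push_cast; ring⟩

lemma gi_add {x y : ℂ} (hx : IsGaussianInt x) (hy : IsGaussianInt y) :
    IsGaussianInt (x + y) := by
  obtain ⟨a, b, rfl⟩ := hx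
  obtain ⟨c, d, rfl⟩ := hy
  exact ⟨a + c, b + d, by push_cast; ring⟩

lemma gi_abs_ge_one {z : ℂ} (hz : IsGaussianInt z) (h0 : z ≠ 0) :
    1 ≤ ‖z‖ := by
  obtain ⟨a, b, rfl⟩ := hz
  have hns : Complex.normSq ((a : ℂ) + (b : ℂ) * Complex.I) = (a : ℝ)^2 + (b : ℝ)^2 := by
    simp [Complex.normSq_apply]; ring
  have hab : a ≠ 0 ∨ b ≠ 0 := by
    by_contra h
    push_neg at h
    apply h0
    simp [h.1, h.2]
  have hint : (1 : ℤ) ≤ a^2 + b^2 := by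
    rcases hab with h | h
    · nlinarith [sq_nonneg b, sq_pos_of_ne_zero h]
    · nlinarith [sq_nonneg a, sq_pos_of_ne_zero h]
  have h1 : (1 : ℝ) ≤ (‖(a : ℂ) + (b : ℂ) * Complex.I‖)^2 := by
    rw [Complex.sq_norm, hns]
    have := (@Int.cast_le ℝ _ _ _).mpr hint
    push_cast at this ⊢
    linarith
  nlinarith [norm_nonneg ((a : ℂ) + (b : ℂ) * Complex.I)]

theorem stmt9 :
    ∃ lbar : ℝ, 0 < lbar ∧
      ∀ n : ℕ, 2 ≤ n →
        ∀ (x₁ x₂ : ℂ) (r₁ r₂ : ℝ), r₁ * r₂ < Real.exp (-lbar) / (n : ℝ) ^ 3 →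
          ∃ a b c : ℂ, (a, b) ≠ ((0 : ℂ), (0 : ℂ)) ∧
            ∀ w : ℂ × ℂ,
              w ∈ (closedBall x₁ r₁) ×ˢ (closedBall x₂ r₂) →
              (∃ z₁ z₂ q : ℂ, IsGaussianInt z₁ ∧ IsGaussianInt z₂ ∧ IsGaussianInt q ∧
                0 < ‖q‖ ∧ ‖q‖ < (n : ℝ) ∧ w = (z₁ / q, z₂ / q)) →
              a * w.1 + b * w.2 = c := by
  refine ⟨Real.log 9, Real.log_pos (by norm_num), ?_⟩
  intro n hn x₁ x₂ r₁ r₂ hr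
  have hexp : Real.exp (-Real.log 9) = 1 / 9 := by
    rw [Real.exp_neg, Real.exp_log (by norm_num : (0:ℝ) < 9)]
    norm_num
  rw [hexp] at hr
  have hn0 : (0 : ℝ) < (n : ℝ) ^ 3 := by positivity
  -- the condition predicate
  set P : ℂ × ℂ → Prop := fun w =>
    w ∈ (closedBall x₁ r₁) ×ˢ (closedBall x₂ r₂) ∧
    (∃ z₁ z₂ q : ℂ, IsGaussianInt z₁ ∧ IsGaussianInt z₂ ∧ IsGaussianInt q ∧
      0 < ‖q‖ ∧ ‖q‖ < (n : ℝ) ∧ w = (z₁ / q, z₂ / q)) with hP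
  by_cases hex : ∃ p p' : ℂ × ℂ, P p ∧ P p' ∧ p ≠ p'
  · obtain ⟨p, p', hp, hp', hpp'⟩ := hex
    refine ⟨p'.2 - p.2, p.1 - p'.1, (p'.2 - p.2) * p.1 + (p.1 - p'.1) * p.2, ?_, ?_⟩
    · intro h
      apply hpp'
      have h1 := congrArg Prod.fst h
      have h2 := congrArg Prod.snd h
      simp only at h1 h2
      have e1 : p.1 = p'.1 := by linear_combination h2
      have e2 : p.2 = p'.2 := by linear_combination -h1
      exact Prod.ext e1 e2
    · intro w hwball hwrat
      -- unpack everything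
      obtain ⟨hpball, z₁, z₂, q, hz₁, hz₂, hq, hq0, hqn, hpe⟩ := hp
      obtain ⟨hpball', z₁', z₂', q', hz₁', hz₂', hq', hq0', hqn', hpe'⟩ := hp'
      obtain ⟨z₁'', z₂'', q'', hz₁'', hz₂'', hq'', hq0'', hqn'', hwe⟩ := hwrat
      have hqne : q ≠ 0 := norm_pos_iff.mp hq0
      have hqne' : q' ≠ 0 := norm_pos_iff.mp hq0'
      have hqne'' : q'' ≠ 0 := norm_pos_iff.mp hq0''
      -- radii are nonneg since p is in the product of balls
      have hr₁ : 0 ≤ r₁ := le_trans dist_nonneg hpball.1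
      have hr₂ : 0 ≤ r₂ := le_trans dist_nonneg hpball.2
      -- the determinant
      set Δ : ℂ := (p'.1 - p.1) * (w.2 - p.2) - (p'.2 - p.2) * (w.1 - p.1) with hΔdef
      have hΔ : Δ = 0 := by
        by_contra hΔne
        -- key algebraic identity
        set N : ℂ := z₁' * z₂'' * q - z₁' * z₂ * q'' - z₁ * z₂'' * q'
          - z₂' * z₁'' * q + z₂' * z₁ * q'' + z₂ * z₁'' * q' with hNdef
        have hkey : Δ * (q * q' * q'') = N := by
          rw [hΔdef, hNdef, hpe, hpe', hwe]
          simp only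
          field_simp
          ring
        have hNgi : IsGaussianInt N := by
          rw [hNdef]
          exact gi_add (gi_add (gi_sub (gi_sub (gi_sub (gi_mul (gi_mul hz₁' hz₂'') hq)
            (gi_mul (gi_mul hz₁' hz₂) hq'')) (gi_mul (gi_mul hz₁ hz₂'') hq'))
            (gi_mul (gi_mul hz₂' hz₁'') hq)) (gi_mul (gi_mul hz₂' hz₁) hq''))
            (gi_mul (gi_mul hz₂ hz₁'') hq')
        have hNne : N ≠ 0 := by
          rw [← hkey]
          exact mul_ne_zero hΔne (mul_ne_zero (mul_ne_zero hqne hqne') hqne'')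
        have hNabs : 1 ≤ ‖N‖ := gi_abs_ge_one hNgi hNne
        -- upper bound on |Δ|
        have hb1 : ‖p'.1 - p.1‖ ≤ 2 * r₁ := by
          have d1 : dist p.1 x₁ ≤ r₁ := hpball.1
          have d2 : dist p'.1 x₁ ≤ r₁ := hpball'.1
          calc ‖p'.1 - p.1‖ = dist p'.1 p.1 := (Complex.dist_eq _ _).symm
          _ ≤ dist p'.1 x₁ + dist x₁ p.1 := dist_triangle _ _ _
          _ ≤ r₁ + r₁ := by rw [dist_comm x₁ p.1]; linarith
          _ = 2 * r₁ := by ring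
        have hb2 : ‖p'.2 - p.2‖ ≤ 2 * r₂ := by
          have d1 : dist p.2 x₂ ≤ r₂ := hpball.2
          have d2 : dist p'.2 x₂ ≤ r₂ := hpball'.2
          calc ‖p'.2 - p.2‖ = dist p'.2 p.2 := (Complex.dist_eq _ _).symm
          _ ≤ dist p'.2 x₂ + dist x₂ p.2 := dist_triangle _ _ _
          _ ≤ r₂ + r₂ := by rw [dist_comm x₂ p.2]; linarith
          _ = 2 * r₂ := by ring
        have hb3 : ‖w.1 - p.1‖ ≤ 2 * r₁ := by
          have d1 : dist p.1 x₁ ≤ r₁ := hpball.1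
          have d2 : dist w.1 x₁ ≤ r₁ := hwball.1
          calc ‖w.1 - p.1‖ = dist w.1 p.1 := (Complex.dist_eq _ _).symm
          _ ≤ dist w.1 x₁ + dist x₁ p.1 := dist_triangle _ _ _
          _ ≤ r₁ + r₁ := by rw [dist_comm x₁ p.1]; linarith
          _ = 2 * r₁ := by ring
        have hb4 : ‖w.2 - p.2‖ ≤ 2 * r₂ := by
          have d1 : dist p.2 x₂ ≤ r₂ := hpball.2
          have d2 : dist w.2 x₂ ≤ r₂ := hwball.2
          calc ‖w.2 - p.2‖ = dist w.2 p.2 := (Complex.dist_eq _ _).symm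
          _ ≤ dist w.2 x₂ + dist x₂ p.2 := dist_triangle _ _ _
          _ ≤ r₂ + r₂ := by rw [dist_comm x₂ p.2]; linarith
          _ = 2 * r₂ := by ring
        have hΔbound : ‖Δ‖ ≤ 8 * (r₁ * r₂) := by
          rw [hΔdef]
          calc ‖(p'.1 - p.1) * (w.2 - p.2) - (p'.2 - p.2) * (w.1 - p.1)‖
              ≤ ‖(p'.1 - p.1) * (w.2 - p.2)‖ +
                ‖(p'.2 - p.2) * (w.1 - p.1)‖ := by
                exact (norm_sub_le _ _)
          _ = ‖p'.1 - p.1‖ * ‖w.2 - p.2‖ +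
              ‖p'.2 - p.2‖ * ‖w.1 - p.1‖ := by
                rw [norm_mul, norm_mul]
          _ ≤ (2 * r₁) * (2 * r₂) + (2 * r₂) * (2 * r₁) := by
                gcongr
          _ = 8 * (r₁ * r₂) := by ring
        -- |q q' q''| < n^3
        have habs := congrArg (‖·‖) hkey
        rw [norm_mul, norm_mul, norm_mul] at habs
        have hQ : ‖q‖ * ‖q'‖ * ‖q''‖ < (n : ℝ) ^ 3 := by
          have h1 : (1:ℝ) ≤ ‖q‖ := gi_abs_ge_one hq hqne
          have h2 : (1:ℝ) ≤ ‖q'‖ := gi_abs_ge_one hq' hqne'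
          have h3 : (1:ℝ) ≤ ‖q''‖ := gi_abs_ge_one hq'' hqne''
          calc ‖q‖ * ‖q'‖ * ‖q''‖
              < ((n:ℝ) * (n:ℝ)) * (n:ℝ) :=
                mul_lt_mul'' (mul_lt_mul'' hqn hqn' hq0.le hq0'.le) hqn''
                  (by positivity) hq0''.le
          _ = (n:ℝ) ^ 3 := by ring
        have hΔnn : 0 ≤ ‖Δ‖ := norm_nonneg _
        have hQpos : 0 < ‖q‖ * ‖q'‖ * ‖q''‖ := by
          positivity
        have hrr : 0 ≤ r₁ * r₂ := mul_nonneg hr₁ hr₂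
        set Q : ℝ := ‖q‖ * ‖q'‖ * ‖q''‖ with hQdef
        have c1 : ‖Δ‖ * Q ≤ 8 * (r₁ * r₂) * Q :=
          mul_le_mul_of_nonneg_right hΔbound hQpos.le
        have c2 : 8 * (r₁ * r₂) * Q ≤ 8 * (r₁ * r₂) * (n:ℝ)^3 := by
          apply mul_le_mul_of_nonneg_left hQ.le (by positivity)
        have c3 : r₁ * r₂ * (n:ℝ)^3 < (1/9/(n:ℝ)^3) * (n:ℝ)^3 :=
          mul_lt_mul_of_pos_right hr hn0
        have c4 : (1/9/((n:ℝ)^3)) * (n:ℝ)^3 = 1/9 := by field_simp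
        rw [c4] at c3
        nlinarith [habs, hNabs]
      -- conclude the linear equation
      linear_combination -hΔ
  · -- no two distinct points satisfying P
    push_neg at hex
    by_cases h1 : ∃ p : ℂ × ℂ, P p
    · obtain ⟨p, hp⟩ := h1
      refine ⟨1, 0, p.1, by simp, ?_⟩
      intro w hwball hwrat
      have : w = p := hex w p ⟨hwball, hwrat⟩ hp
      rw [this]; ring
    · refine ⟨1, 0, 0, by simp, ?_⟩
      intro w hwball hwrat
      exact absurd ⟨hwball, hwrat⟩ (not_exists.mp h1 w)
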